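/- Let I_1 and I_2 be non-constant inner functions such that the H^∞-Toeplitz kernel N^∞[conj(I_1)·I_2] is nontrivial, i.e., there exists a nonzero g ∈ H^∞ with conj(I_1)·I_2·g ∈ conj(H^∞) a.e. on R. Then I_2 ⪯ I_1, that is, D(I_2) ⊆ D(I_1). -/

import Mathlib

open MeasureTheory Filter Set Complex
open scoped ENNReal NNReal Topology

noncomputable section

/-- The open upper half-plane `ℂ₊`. -/
def UHP : Set ℂ := {z : ℂ | 0 < z.im}

/-- Canonical boundary value of `f : ℂ → ℂ` at `x ∈ ℝ`:
the vertical (non-tangential) limit, whenever it exists. -/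
def bdry (f : ℂ → ℂ) (x : ℝ) : ℂ :=
  limUnder (nhdsWithin (0:ℝ) (Set.Ioi (0:ℝ))) (fun y : ℝ => f ((x : ℂ) + y * Complex.I))

/-- `f` has a boundary value at `x` (then it equals `bdry f x`). -/
def HasBdry (f : ℂ → ℂ) (x : ℝ) : Prop :=
  Tendsto (fun y : ℝ => f ((x : ℂ) + y * Complex.I)) (nhdsWithin (0:ℝ) (Set.Ioi (0:ℝ)))
    (nhds (bdry f x))

/-- Membership in the Hardy space `H²(ℂ₊)`. -/
def MemH2 (f : ℂ → ℂ) : Prop :=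
  DifferentiableOn ℂ f UHP ∧ (∀ᵐ x : ℝ, HasBdry f x) ∧
  ∃ M : ℝ≥0∞, M ≠ ⊤ ∧ ∀ y : ℝ, 0 < y →
    (∫⁻ x : ℝ, (‖f ((x:ℂ) + y * Complex.I)‖₊ : ℝ≥0∞) ^ 2) ≤ M

/-- Membership in `H^∞(ℂ₊)` (with a.e. existing boundary values). -/
def MemHinf (f : ℂ → ℂ) : Prop :=
  DifferentiableOn ℂ f UHP ∧ (∀ᵐ x : ℝ, HasBdry f x) ∧ ∃ M : ℝ, ∀ z ∈ UHP, ‖f z‖ ≤ M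

/-- Inner function in `ℂ₊`: bounded analytic with unimodular boundary values a.e. -/
def IsInner (f : ℂ → ℂ) : Prop :=
  DifferentiableOn ℂ f UHP ∧ (∀ z ∈ UHP, ‖f z‖ ≤ 1) ∧
  ∀ᵐ x : ℝ, HasBdry f x ∧ ‖bdry f x‖ = 1

/-- Outer function in `ℂ₊`: zero-free analytic function whose log-modulus is the
Poisson extension of its boundary log-modulus. -/
def IsOuter (f : ℂ → ℂ) : Prop :=
  DifferentiableOn ℂ f UHP ∧ (∀ z ∈ UHP, f z ≠ 0) ∧ (∀ᵐ x : ℝ, HasBdry f x) ∧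
  ∀ z ∈ UHP, Real.log ‖f z‖ =
    (1 / Real.pi) * ∫ t : ℝ, (z.im / ((z.re - t) ^ 2 + z.im ^ 2)) * Real.log ‖bdry f t‖

/-- Membership in the Toeplitz kernel `N[U]` for a unimodular boundary symbol `U`:
`f ∈ H²` and `U·f ∈ conj(H²)` on the boundary. -/
def MemKer (U : ℝ → ℂ) (f : ℂ → ℂ) : Prop :=
  MemH2 f ∧ ∃ g : ℂ → ℂ, MemH2 g ∧ ∀ᵐ x : ℝ, U x * bdry f x = star (bdry g x)

/-- `f` is nontrivial on `ℂ₊`. -/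
def NontrivialOnUHP (f : ℂ → ℂ) : Prop := ∃ z ∈ UHP, f z ≠ 0

/-- The boundary symbol `conj θ · I`. -/
def symb (θ I : ℂ → ℂ) : ℝ → ℂ := fun x => star (bdry θ x) * bdry I x

/-- The dominance set `D(θ)`: inner functions `I` with `N[conj θ · I] ≠ 0`. -/
def Dom (θ : ℂ → ℂ) : Set (ℂ → ℂ) :=
  {I | IsInner I ∧ ∃ f : ℂ → ℂ, MemKer (symb θ I) f ∧ NontrivialOnUHP f}

/-- Membership in the model space `K_θ = N[conj θ]`. -/
def MemKtheta (θ f : ℂ → ℂ) : Prop := MemKer (fun x => star (bdry θ x)) f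

/-- Total elements of `D(θ)`: those `I` for which `N[conj θ · I]` contains a purely
outer function, i.e. an outer `f` with `conj θ · I · f = conj f` a.e. on `ℝ`. -/
def DomT (θ : ℂ → ℂ) : Set (ℂ → ℂ) :=
  {I | IsInner I ∧ ∃ f : ℂ → ℂ, MemH2 f ∧ IsOuter f ∧
    ∀ᵐ x : ℝ, star (bdry θ x) * bdry I x * bdry f x = star (bdry f x)}

/-- `I` divides `J`: `J / I` is inner. -/
def Divides (I J : ℂ → ℂ) : Prop :=
  ∃ Q : ℂ → ℂ, IsInner Q ∧ ∀ z ∈ UHP, J z = I z * Q z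

/-- Base elements of `D(θ)`: maximal with respect to division (they divide no element
of `D(θ)` other than their own unimodular multiples). -/
def DomB (θ : ℂ → ℂ) : Set (ℂ → ℂ) :=
  {I | I ∈ Dom θ ∧ ∀ J ∈ Dom θ, Divides I J →
    ∃ c : ℂ, ‖c‖ = 1 ∧ ∀ z ∈ UHP, J z = c * I z}

/-- Meromorphic inner function: here `θ : ℂ → ℂ` denotes the meromorphic extension
to `ℂ` of an inner function in `ℂ₊`. -/
def IsMIF (θ : ℂ → ℂ) : Prop := IsInner θ ∧ MeromorphicOn θ Set.univ

/-- Poisson summability of a function on `ℝ`. -/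
def PoissonSummable (φ : ℝ → ℝ) : Prop := Integrable (fun t : ℝ => φ t / (1 + t ^ 2))

/-- `ψ` is a harmonic conjugate of `φ` on `ℝ`: `ψ` is the a.e. boundary value of the
imaginary part of an analytic function on `ℂ₊` whose real part is the Poisson
extension of `φ`. -/
def IsHarmConjOf (ψ φ : ℝ → ℝ) : Prop :=
  PoissonSummable φ ∧
  ∃ F : ℂ → ℂ, DifferentiableOn ℂ F UHP ∧
    (∀ z ∈ UHP, (F z).re =
      (1 / Real.pi) * ∫ t : ℝ, (z.im / ((z.re - t) ^ 2 + z.im ^ 2)) * φ t) ∧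
    ∀ᵐ x : ℝ, Tendsto (fun y : ℝ => (F ((x:ℂ) + y * Complex.I)).im)
      (nhdsWithin (0:ℝ) (Set.Ioi (0:ℝ))) (nhds (ψ x))

/-- `Log|H²| = { log|g| : 0 ≠ g ∈ H²(ℂ₊) }` (as boundary functions, up to a.e. equality). -/
def MemLogH2 (u : ℝ → ℝ) : Prop :=
  ∃ g : ℂ → ℂ, MemH2 g ∧ NontrivialOnUHP g ∧ ∀ᵐ x : ℝ, u x = Real.log ‖bdry g x‖

/-- `E^#(z) = conj (E (conj z))`. -/
def Esharp (E : ℂ → ℂ) : ℂ → ℂ := fun z => star (E (star z))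

/-- Hermite–Biehler function: entire, `|E(conj z)| < |E z|` on `ℂ₊`, no real zeros. -/
def IsHB (E : ℂ → ℂ) : Prop :=
  Differentiable ℂ E ∧ (∀ z ∈ UHP, ‖E (star z)‖ < ‖E z‖) ∧ ∀ x : ℝ, E (x:ℂ) ≠ 0

/-- The meromorphic inner function `θ_E = E^#/E` of a de Branges function. -/
def thetaOf (E : ℂ → ℂ) : ℂ → ℂ := fun z => Esharp E z / E z

/-- Membership in the de Branges space `B(E)`: `F` entire with `F/E, F^#/E ∈ H²(ℂ₊)`. -/
def MemDB (E F : ℂ → ℂ) : Prop :=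
  Differentiable ℂ F ∧ MemH2 (fun z => F z / E z) ∧ MemH2 (fun z => Esharp F z / E z)

/-- The Nevanlinna class `N(ℂ₊)`: quotients of bounded analytic functions. -/
def MemNevanlinna (f : ℂ → ℂ) : Prop :=
  ∃ g h : ℂ → ℂ, DifferentiableOn ℂ g UHP ∧ DifferentiableOn ℂ h UHP ∧
    (∀ z ∈ UHP, ‖g z‖ ≤ 1) ∧ (∀ z ∈ UHP, ‖h z‖ ≤ 1) ∧
    ∀ z ∈ UHP, h z ≠ 0 ∧ f z = g z / h z

/-- `T` is the total inner component of `f ∈ K_θ`: if `f = I₁·g` with `I₁` inner and `g`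
outer on `ℂ₊`, and `conj θ · f = conj (I₂ · g)` a.e. on `ℝ` with `I₂` inner,
then `T = I₁·I₂`. -/
def IsTotalInnerComponent (θ f T : ℂ → ℂ) : Prop :=
  ∃ I₁ I₂ g : ℂ → ℂ, IsInner I₁ ∧ IsInner I₂ ∧ IsOuter g ∧
    (∀ z ∈ UHP, f z = I₁ z * g z) ∧
    (∀ᵐ x : ℝ, star (bdry θ x) * bdry f x = star (bdry I₂ x * bdry g x)) ∧
    ∀ z ∈ UHP, T z = I₁ z * I₂ z

/-- `T` is the total inner component of `F ∈ B(E)`: `F = I₁·f·E` and `F^# = I₂·f·E`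
on `ℂ₊` with `I₁, I₂` inner and `f` outer; then `T = I₁·I₂`. -/
def IsDBTotal (E F T : ℂ → ℂ) : Prop :=
  ∃ I₁ I₂ f : ℂ → ℂ, IsInner I₁ ∧ IsInner I₂ ∧ IsOuter f ∧ MemH2 f ∧
    (∀ z ∈ UHP, F z = I₁ z * f z * E z) ∧
    (∀ z ∈ UHP, Esharp F z = I₂ z * f z * E z) ∧
    ∀ z ∈ UHP, T z = I₁ z * I₂ z

/-- Clark (Herglotz) representation of an inner function `θ`: the measure `μ` on `ℝ`
together with the point mass `p ≥ 0` at infinity. -/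
def IsClarkOf (μ : Measure ℝ) (p : ℝ) (θ : ℂ → ℂ) : Prop :=
  0 ≤ p ∧ ∀ z ∈ UHP, ((1 + θ z) / (1 - θ z)).re =
    p * z.im + (1 / Real.pi) * ∫ t : ℝ, z.im / ((z.re - t) ^ 2 + z.im ^ 2) ∂μ

/-- The singular inner function `S^a(z) = e^{iaz}`. -/
def Sfun (a : ℝ) : ℂ → ℂ := fun z => Complex.exp (Complex.I * a * z)



lemma UHP_open : IsOpen UHP := isOpen_lt continuous_const Complex.continuous_im

lemma UHP_preconnected : IsPreconnected UHP := (convex_halfSpace_im_gt (0:ℝ)).isPreconnected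

lemma mem_UHP_of_pos {x y : ℝ} (hy : 0 < y) : (x:ℂ) + y * Complex.I ∈ UHP := by
  simp [UHP, Complex.add_im, Complex.mul_im]; exact hy

/-- Boundary value of a product. -/
lemma hasBdry_mul {g f : ℂ → ℂ} {x : ℝ} (hgx : HasBdry g x) (hfx : HasBdry f x) :
    HasBdry (fun z => g z * f z) x ∧
      bdry (fun z => g z * f z) x = bdry g x * bdry f x := by
  have ht : Tendsto (fun y : ℝ => g ((x:ℂ) + y * Complex.I) * f ((x:ℂ) + y * Complex.I))
      (nhdsWithin (0:ℝ) (Set.Ioi (0:ℝ))) (nhds (bdry g x * bdry f x)) := hgx.mul hfx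
  have heq : bdry (fun z => g z * f z) x = bdry g x * bdry f x := ht.limUnder_eq
  refine ⟨?_, heq⟩
  unfold HasBdry
  rw [heq]
  exact ht

/-- Product of an `H^∞` function with an `H²` function is in `H²`. -/
lemma memH2_mul {g f : ℂ → ℂ} (hg : MemHinf g) (hf : MemH2 f) :
    MemH2 (fun z => g z * f z) := by
  obtain ⟨hgd, hgb, M, hM⟩ := hg
  obtain ⟨hfd, hfb, Mf, hMf, hMfb⟩ := hf
  refine ⟨hgd.mul hfd, ?_, ?_⟩
  · filter_upwards [hgb, hfb] with x hgx hfx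
    exact (hasBdry_mul hgx hfx).1
  · set C : ℝ≥0 := Real.toNNReal M with hC
    refine ⟨(C:ℝ≥0∞) ^ 2 * Mf, ENNReal.mul_ne_top (by simp) hMf, fun y hy => ?_⟩
    have hbound : ∀ x : ℝ,
        (‖g ((x:ℂ) + y * Complex.I) * f ((x:ℂ) + y * Complex.I)‖₊ : ℝ≥0∞) ^ 2
          ≤ (C:ℝ≥0∞) ^ 2 * (‖f ((x:ℂ) + y * Complex.I)‖₊ : ℝ≥0∞) ^ 2 := by
      intro x
      have hz : (x:ℂ) + y * Complex.I ∈ UHP := mem_UHP_of_pos hy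
      have h1 : ‖g ((x:ℂ) + y * Complex.I)‖₊ ≤ C := by
        rw [← NNReal.coe_le_coe]
        exact le_trans (hM _ hz) (Real.le_coe_toNNReal M)
      have h2 : (‖g ((x:ℂ) + y * Complex.I) * f ((x:ℂ) + y * Complex.I)‖₊ : ℝ≥0∞)
          ≤ (C:ℝ≥0∞) * (‖f ((x:ℂ) + y * Complex.I)‖₊ : ℝ≥0∞) := by
        rw [nnnorm_mul, ENNReal.coe_mul]
        exact mul_le_mul_left (ENNReal.coe_le_coe.2 h1) _
      calc (‖g ((x:ℂ) + y * Complex.I) * f ((x:ℂ) + y * Complex.I)‖₊ : ℝ≥0∞) ^ 2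
          ≤ ((C:ℝ≥0∞) * (‖f ((x:ℂ) + y * Complex.I)‖₊ : ℝ≥0∞)) ^ 2 := pow_le_pow_left' h2 2
        _ = (C:ℝ≥0∞) ^ 2 * (‖f ((x:ℂ) + y * Complex.I)‖₊ : ℝ≥0∞) ^ 2 := mul_pow _ _ _
    calc (∫⁻ x : ℝ, (‖(fun z => g z * f z) ((x:ℂ) + y * Complex.I)‖₊ : ℝ≥0∞) ^ 2)
        ≤ ∫⁻ x : ℝ, (C:ℝ≥0∞) ^ 2 * (‖f ((x:ℂ) + y * Complex.I)‖₊ : ℝ≥0∞) ^ 2 :=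
          lintegral_mono fun x => hbound x
      _ = (C:ℝ≥0∞) ^ 2 * ∫⁻ x : ℝ, (‖f ((x:ℂ) + y * Complex.I)‖₊ : ℝ≥0∞) ^ 2 :=
          lintegral_const_mul' _ _ (by simp)
      _ ≤ (C:ℝ≥0∞) ^ 2 * Mf := mul_le_mul_right (hMfb y hy) _

/-- Identity theorem: a product of two functions analytic on `UHP`, each nontrivial,
is nontrivial. -/
lemma nontrivial_mul {g f : ℂ → ℂ} (hgd : DifferentiableOn ℂ g UHP)
    (hfd : DifferentiableOn ℂ f UHP) (hgne : NontrivialOnUHP g)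
    (hfne : NontrivialOnUHP f) : NontrivialOnUHP (fun z => g z * f z) := by
  by_contra h
  unfold NontrivialOnUHP at h
  push_neg at h
  obtain ⟨zg, hzg, hzgne⟩ := hgne
  obtain ⟨zf, hzf, hzfne⟩ := hfne
  have hga : AnalyticOnNhd ℂ g UHP := hgd.analyticOnNhd UHP_open
  have hfa : AnalyticOnNhd ℂ f UHP := hfd.analyticOnNhd UHP_open
  -- near zg, g ≠ 0, hence f = 0 near zg
  have hgc : ContinuousAt g zg := (hga zg hzg).continuousAt
  have hne : {z : ℂ | g z ≠ 0} ∈ nhds zg :=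
    hgc.preimage_mem_nhds (compl_singleton_mem_nhds hzgne)
  have hU : UHP ∈ nhds zg := UHP_open.mem_nhds hzg
  have hfz : f =ᶠ[nhds zg] 0 := by
    filter_upwards [hne, hU] with z hz hzU
    have : g z * f z = 0 := by
      exact h z hzU
    exact (mul_eq_zero.1 this).resolve_left hz
  have : Set.EqOn f 0 UHP :=
    hfa.eqOn_zero_of_preconnected_of_eventuallyEq_zero UHP_preconnected hzg hfz
  exact hzfne (this hzf)

/-- Lemma 1. If `I₁, I₂` are non-constant inner functions with
`N^∞[conj I₁ · I₂] ≠ 0`, then `I₂ ⪯ I₁`, i.e., `D(I₂) ⊆ D(I₁)`. -/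
theorem dom_subset_of_Hinf_kernel_nontrivial (I₁ I₂ : ℂ → ℂ)
    (h₁ : IsInner I₁) (h₂ : IsInner I₂)
    (hnc₁ : ¬ ∃ c : ℂ, ∀ z ∈ UHP, I₁ z = c)
    (hnc₂ : ¬ ∃ c : ℂ, ∀ z ∈ UHP, I₂ z = c)
    (g : ℂ → ℂ) (hg : MemHinf g) (hgne : NontrivialOnUHP g)
    (hker : ∃ G : ℂ → ℂ, MemHinf G ∧
      ∀ᵐ x : ℝ, star (bdry I₁ x) * bdry I₂ x * bdry g x = star (bdry G x)) :
    Dom I₂ ⊆ Dom I₁ := by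
  intro J hJ
  obtain ⟨hJinner, f, ⟨hfH2, h, hhH2, hae⟩, hfne⟩ := hJ
  obtain ⟨G, hGinf, hGae⟩ := hker
  refine ⟨hJinner, fun z => g z * f z, ⟨memH2_mul hg hfH2, fun z => G z * h z,
    memH2_mul hGinf hhH2, ?_⟩, nontrivial_mul hg.1 hfH2.1 hgne hfne⟩
  filter_upwards [hae, hGae, h₁.2.2, h₂.2.2, hg.2.1, hfH2.2.1, hhH2.2.1, hGinf.2.1]
    with x hae hGae hI₁ hI₂ hgx hfx hhx hGx
  unfold symb at hae ⊢
  have hmul1 : bdry (fun z => g z * f z) x = bdry g x * bdry f x := (hasBdry_mul hgx hfx).2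
  have hmul2 : bdry (fun z => G z * h z) x = bdry G x * bdry h x := (hasBdry_mul hGx hhx).2
  have hE3 : star (bdry I₂ x) * bdry I₂ x = 1 := by
    have : bdry I₂ x * star (bdry I₂ x) = ((Complex.normSq (bdry I₂ x) : ℝ) : ℂ) :=
      Complex.mul_conj _
    have hn : Complex.normSq (bdry I₂ x) = 1 := by
      rw [Complex.normSq_eq_norm_sq, hI₂.2]; norm_num
    rw [mul_comm] at this
    rw [this, hn]; norm_num
  rw [hmul1, hmul2, star_mul']
  linear_combination (star (bdry h x)) * hGae
    + (star (bdry I₁ x) * bdry I₂ x * bdry g x) * hae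
    - (star (bdry I₁ x) * bdry J x * bdry g x * bdry f x) * hE3


end
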